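/- Fix τ ∈ (0,1). For every y ∈ ℝ, pr^{(Γ(·,y), π₂*)}(Y ≤ f(y)) ≥ τ and f(y) ≤ y*_τ. -/

import Mathlib

open MeasureTheory ProbabilityTheory Filter Set

noncomputable section

/-- sign function: `1` if `0 ≤ x`, `−1` otherwise. -/
def sgn (x : ℝ) : ℝ := if 0 ≤ x then 1 else -1

/-- `pr^π(Y ≤ y)`, the CDF of the outcome induced by the regime `(π₁, π₂)`:
`∫∫ F_ε(y − m(h₂) − π₂(h₂) c(h₂)) κ((h₁, π₁(h₁)), dh₂) μ(dh₁)`. -/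
def prPi {X1 X2 : Type*} [MeasurableSpace X1] [MeasurableSpace X2]
    (μ : Measure X1) (κ : Kernel (X1 × ℝ) X2) (m c : X2 → ℝ) (Feps : ℝ → ℝ)
    (π₁ : X1 → ℝ) (π₂ : X2 → ℝ) (y : ℝ) : ℝ :=
  ∫ h₁, (∫ h₂, Feps (y - m h₂ - π₂ h₂ * c h₂) ∂(κ (h₁, π₁ h₁))) ∂μ

/-- `I(y, F, G) = ∫ F(y − u − |v|) dG(u,v)`. -/
def Ifun (y : ℝ) (F : ℝ → ℝ) (G : Measure (ℝ × ℝ)) : ℝ :=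
  ∫ p, F (y - p.1 - |p.2|) ∂G

/-- `G(·,· | h₁, a₁)`: the pushforward of `κ((h₁,a₁),·)` under `h₂ ↦ (m h₂, c h₂)`. -/
def Gdist {X1 X2 : Type*} [MeasurableSpace X1] [MeasurableSpace X2]
    (κ : Kernel (X1 × ℝ) X2) (m c : X2 → ℝ) (h₁ : X1) (a₁ : ℝ) : Measure (ℝ × ℝ) :=
  (κ (h₁, a₁)).map (fun h₂ => (m h₂, c h₂))

/-- `d(h₁, y) = I(y, F_ε, G(·,·|h₁,−1)) − I(y, F_ε, G(·,·|h₁,1))`. -/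
def dfun {X1 X2 : Type*} [MeasurableSpace X1] [MeasurableSpace X2]
    (κ : Kernel (X1 × ℝ) X2) (m c : X2 → ℝ) (Feps : ℝ → ℝ) (h₁ : X1) (y : ℝ) : ℝ :=
  Ifun y Feps (Gdist κ m c h₁ (-1)) - Ifun y Feps (Gdist κ m c h₁ 1)

/-- `Γ(h₁, y) = sgn(d(h₁, y))`. -/
def Gam {X1 X2 : Type*} [MeasurableSpace X1] [MeasurableSpace X2]
    (κ : Kernel (X1 × ℝ) X2) (m c : X2 → ℝ) (Feps : ℝ → ℝ) (h₁ : X1) (y : ℝ) : ℝ :=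
  sgn (dfun κ m c Feps h₁ y)

/-- `q^π(τ) = inf{y : pr^π(Y ≤ y) ≥ τ}`. -/
def quant {X1 X2 : Type*} [MeasurableSpace X1] [MeasurableSpace X2]
    (μ : Measure X1) (κ : Kernel (X1 × ℝ) X2) (m c : X2 → ℝ) (Feps : ℝ → ℝ)
    (τ : ℝ) (π₁ : X1 → ℝ) (π₂ : X2 → ℝ) : ℝ :=
  sInf {y : ℝ | τ ≤ prPi μ κ m c Feps π₁ π₂ y}

/-- `y*_τ = inf{y : pr^{(Γ(·,y), π₂*)}(Y ≤ y) ≥ τ}` where `π₂*(h₂) = sgn(c(h₂))`. -/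
def ystar {X1 X2 : Type*} [MeasurableSpace X1] [MeasurableSpace X2]
    (μ : Measure X1) (κ : Kernel (X1 × ℝ) X2) (m c : X2 → ℝ) (Feps : ℝ → ℝ)
    (τ : ℝ) : ℝ :=
  sInf {y : ℝ |
    τ ≤ prPi μ κ m c Feps (fun h₁ => Gam κ m c Feps h₁ y) (fun h₂ => sgn (c h₂)) y}

/-- `f(y) = q^{(Γ(·,y), π₂*)}(τ)`. -/
def fQIQ {X1 X2 : Type*} [MeasurableSpace X1] [MeasurableSpace X2]
    (μ : Measure X1) (κ : Kernel (X1 × ℝ) X2) (m c : X2 → ℝ) (Feps : ℝ → ℝ)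
    (τ : ℝ) (y : ℝ) : ℝ :=
  quant μ κ m c Feps τ (fun h₁ => Gam κ m c Feps h₁ y) (fun h₂ => sgn (c h₂))

lemma measurable_sgn : Measurable sgn :=
  Measurable.ite measurableSet_Ici measurable_const measurable_const

lemma sgn_vals (x : ℝ) : sgn x = 1 ∨ sgn x = -1 := by
  unfold sgn; split <;> simp

lemma sgn_mul_self (x : ℝ) : sgn x * x = |x| := by
  unfold sgn; split
  · rw [one_mul, abs_of_nonneg ‹_›]
  · rw [neg_one_mul, abs_of_neg (lt_of_not_ge ‹_›)]

lemma int01 {α : Type*} [MeasurableSpace α] (ν : Measure α) [IsProbabilityMeasure ν]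
    {g : α → ℝ} (hg : AEStronglyMeasurable g ν) (hb : ∀ x, g x ∈ Icc (0:ℝ) 1) :
    Integrable g ν :=
  (integrable_const 1).mono' hg
    (Filter.Eventually.of_forall fun x => by
      rw [Real.norm_eq_abs, abs_le]; exact ⟨by linarith [(hb x).1], (hb x).2⟩)

lemma mem01 {α : Type*} [MeasurableSpace α] (ν : Measure α) [IsProbabilityMeasure ν]
    {g : α → ℝ} (hg : AEStronglyMeasurable g ν) (hb : ∀ x, g x ∈ Icc (0:ℝ) 1) :
    (∫ x, g x ∂ν) ∈ Icc (0:ℝ) 1 := by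
  constructor
  · exact integral_nonneg fun x => (hb x).1
  · calc (∫ x, g x ∂ν) ≤ ∫ _, (1:ℝ) ∂ν :=
        integral_mono (int01 ν hg hb) (integrable_const 1) fun x => (hb x).2
      _ = 1 := by simp

section Aux

variable {X1 X2 : Type*} [MeasurableSpace X1] [MeasurableSpace X2]
  (μ : Measure X1) [IsProbabilityMeasure μ]
  (κ : Kernel (X1 × ℝ) X2) [IsMarkovKernel κ]
  (m c : X2 → ℝ) (Feps : ℝ → ℝ)

variable (hm : Measurable m) (hc : Measurable c)
  (hF_mono : Monotone Feps) (hF_mem : ∀ x : ℝ, Feps x ∈ Icc (0:ℝ) 1)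

include hm hc hF_mono

lemma g_meas (w : ℝ) :
    Measurable fun h₂ => Feps (w - m h₂ - sgn (c h₂) * c h₂) :=
  hF_mono.measurable.comp
    ((measurable_const.sub hm).sub ((measurable_sgn.comp hc).mul hc))

omit hm hc hF_mono

lemma outer_meas {g : X2 → ℝ} (hg : Measurable g) {π₁ : X1 → ℝ} (hπ₁ : Measurable π₁) :
    Measurable fun h₁ => ∫ h₂, g h₂ ∂κ (h₁, π₁ h₁) := by
  have h1 : StronglyMeasurable fun p : X1 × ℝ => ∫ h₂, g h₂ ∂κ p :=
    MeasureTheory.StronglyMeasurable.integral_kernel_prod_right'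
      (f := fun q : (X1 × ℝ) × X2 => g q.2) (hg.comp measurable_snd).stronglyMeasurable
  exact h1.measurable.comp (measurable_id.prodMk hπ₁)

include hm hc hF_mono hF_mem

lemma outer_int {π₁ : X1 → ℝ} (hπ₁ : Measurable π₁) (w : ℝ) :
    Integrable (fun h₁ => ∫ h₂, Feps (w - m h₂ - sgn (c h₂) * c h₂) ∂κ (h₁, π₁ h₁)) μ :=
  int01 μ ((outer_meas κ (g_meas m c Feps hm hc hF_mono w) hπ₁).aestronglyMeasurable)
    (fun h₁ => mem01 _ (g_meas m c Feps hm hc hF_mono w).aestronglyMeasurable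
      (fun x => hF_mem _))

lemma Ifun_eq (h₁ : X1) (a w : ℝ) :
    Ifun w Feps (Gdist κ m c h₁ a) =
      ∫ h₂, Feps (w - m h₂ - sgn (c h₂) * c h₂) ∂κ (h₁, a) := by
  have hfm : Measurable fun p : ℝ × ℝ => Feps (w - p.1 - |p.2|) :=
    hF_mono.measurable.comp
      ((measurable_const.sub measurable_fst).sub measurable_snd.abs)
  rw [Ifun, Gdist, integral_map (hm.prodMk hc).aemeasurable hfm.aestronglyMeasurable]
  simp_rw [sgn_mul_self]

lemma Gam_meas (y : ℝ) : Measurable fun h₁ => Gam κ m c Feps h₁ y := by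
  apply measurable_sgn.comp
  have h1 : ∀ a : ℝ, Measurable fun h₁ => Ifun y Feps (Gdist κ m c h₁ a) := by
    intro a
    simp_rw [Ifun_eq κ m c Feps hm hc hF_mono hF_mem]
    exact outer_meas κ (g_meas m c Feps hm hc hF_mono y) measurable_const
  exact (h1 (-1)).sub (h1 1)

lemma tendsto_prPi {π₁ : X1 → ℝ} (hπ₁ : Measurable π₁)
    {l : Filter ℝ} [l.IsCountablyGenerated]
    {φ : ℝ → ℝ} (hφb : ∀ t, φ t ∈ Icc (0:ℝ) 1)
    (hlim : ∀ t : ℝ, Tendsto (fun w => Feps (w - t)) l (nhds (φ t))) :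
    Tendsto (fun w => prPi μ κ m c Feps π₁ (fun h₂ => sgn (c h₂)) w) l
      (nhds (∫ h₁, ∫ h₂, φ (m h₂ + sgn (c h₂) * c h₂) ∂κ (h₁, π₁ h₁) ∂μ)) := by
  unfold prPi
  apply tendsto_integral_filter_of_dominated_convergence (fun _ => (1:ℝ))
  · exact Filter.Eventually.of_forall fun w =>
      (outer_meas κ (g_meas m c Feps hm hc hF_mono w) hπ₁).aestronglyMeasurable
  · refine Filter.Eventually.of_forall fun w => Filter.Eventually.of_forall fun h₁ => ?_
    have h2 := mem01 (κ (h₁, π₁ h₁))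
      (g_meas m c Feps hm hc hF_mono w).aestronglyMeasurable (fun x => hF_mem _)
    rw [Real.norm_eq_abs, abs_le]; exact ⟨by linarith [h2.1], h2.2⟩
  · exact integrable_const 1
  · refine Filter.Eventually.of_forall fun h₁ => ?_
    apply tendsto_integral_filter_of_dominated_convergence (fun _ => (1:ℝ))
    · exact Filter.Eventually.of_forall fun w =>
        (g_meas m c Feps hm hc hF_mono w).aestronglyMeasurable
    · refine Filter.Eventually.of_forall fun w => Filter.Eventually.of_forall fun h₂ => ?_
      rw [Real.norm_eq_abs, abs_le]
      exact ⟨by linarith [(hF_mem (w - m h₂ - sgn (c h₂) * c h₂)).1],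
        (hF_mem (w - m h₂ - sgn (c h₂) * c h₂)).2⟩
    · exact integrable_const 1
    · refine Filter.Eventually.of_forall fun h₂ => ?_
      have h3 := hlim (m h₂ + sgn (c h₂) * c h₂)
      simpa [sub_sub] using h3

lemma prPi_mono {π₁ : X1 → ℝ} (hπ₁ : Measurable π₁) :
    Monotone (prPi μ κ m c Feps π₁ (fun h₂ => sgn (c h₂))) := by
  intro w₁ w₂ hw
  unfold prPi
  refine integral_mono (outer_int μ κ m c Feps hm hc hF_mono hF_mem hπ₁ w₁)
    (outer_int μ κ m c Feps hm hc hF_mono hF_mem hπ₁ w₂) fun h₁ => ?_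
  refine integral_mono
    (int01 _ (g_meas m c Feps hm hc hF_mono w₁).aestronglyMeasurable fun x => hF_mem _)
    (int01 _ (g_meas m c Feps hm hc hF_mono w₂).aestronglyMeasurable fun x => hF_mem _)
    fun h₂ => hF_mono (by linarith)

lemma tendsto_prPi_atTop {π₁ : X1 → ℝ} (hπ₁ : Measurable π₁)
    (hF_top : Tendsto Feps atTop (nhds 1)) :
    Tendsto (fun w => prPi μ κ m c Feps π₁ (fun h₂ => sgn (c h₂)) w) atTop (nhds 1) := by
  have h := tendsto_prPi μ κ m c Feps hm hc hF_mono hF_mem hπ₁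
    (φ := fun _ => (1:ℝ)) (fun t => by constructor <;> norm_num)
    (fun t => by
      have := hF_top.comp (tendsto_atTop_add_const_right atTop (-t) tendsto_id)
      simpa [Function.comp_def, sub_eq_add_neg] using this)
  simpa using h

lemma tendsto_prPi_atBot {π₁ : X1 → ℝ} (hπ₁ : Measurable π₁)
    (hF_bot : Tendsto Feps atBot (nhds 0)) :
    Tendsto (fun w => prPi μ κ m c Feps π₁ (fun h₂ => sgn (c h₂)) w) atBot (nhds 0) := by
  have h := tendsto_prPi μ κ m c Feps hm hc hF_mono hF_mem hπ₁
    (φ := fun _ => (0:ℝ)) (fun t => by constructor <;> norm_num)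
    (fun t => by
      have := hF_bot.comp (tendsto_atBot_add_const_right atBot (-t) tendsto_id)
      simpa [Function.comp_def, sub_eq_add_neg] using this)
  simpa using h

lemma quant_mem {π₁ : X1 → ℝ} (hπ₁ : Measurable π₁)
    (hF_rc : ∀ x : ℝ, ContinuousWithinAt Feps (Ici x) x)
    (hF_bot : Tendsto Feps atBot (nhds 0)) (hF_top : Tendsto Feps atTop (nhds 1))
    {τ : ℝ} (hτ : τ ∈ Ioo (0:ℝ) 1) :
    {w : ℝ | τ ≤ prPi μ κ m c Feps π₁ (fun h₂ => sgn (c h₂)) w}.Nonempty ∧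
    BddBelow {w : ℝ | τ ≤ prPi μ κ m c Feps π₁ (fun h₂ => sgn (c h₂)) w} ∧
    τ ≤ prPi μ κ m c Feps π₁ (fun h₂ => sgn (c h₂))
      (sInf {w : ℝ | τ ≤ prPi μ κ m c Feps π₁ (fun h₂ => sgn (c h₂)) w}) := by
  set P := prPi μ κ m c Feps π₁ (fun h₂ => sgn (c h₂)) with hP
  set S := {w : ℝ | τ ≤ P w} with hS
  have hPmono : Monotone P := prPi_mono μ κ m c Feps hm hc hF_mono hF_mem hπ₁
  have hne : S.Nonempty := by
    obtain ⟨w, hw⟩ :=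
      ((tendsto_prPi_atTop μ κ m c Feps hm hc hF_mono hF_mem hπ₁
        hF_top).eventually_const_le hτ.2).exists
    exact ⟨w, hw⟩
  have hbdd : BddBelow S := by
    obtain ⟨w₀, hw₀⟩ := eventually_atBot.mp
      ((tendsto_prPi_atBot μ κ m c Feps hm hc hF_mono hF_mem hπ₁
        hF_bot).eventually_lt_const hτ.1)
    refine ⟨w₀, fun z hz => ?_⟩
    by_contra h
    push_neg at h
    exact absurd (show τ ≤ P z from hz) (not_le.mpr (hw₀ z h.le))
  refine ⟨hne, hbdd, ?_⟩
  set q := sInf S with hq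
  have hlim : Tendsto P (nhdsWithin q (Ici q)) (nhds (P q)) := by
    have h := tendsto_prPi μ κ m c Feps hm hc hF_mono hF_mem hπ₁
      (l := nhdsWithin q (Ici q)) (φ := fun t => Feps (q - t)) (fun t => hF_mem _)
      (fun t => by
        have h1 : Tendsto (fun w => w - t) (nhdsWithin q (Ici q))
            (nhdsWithin (q - t) (Ici (q - t))) := by
          apply tendsto_nhdsWithin_of_tendsto_nhds_of_eventually_within
          · exact (continuous_id.sub continuous_const).continuousAt.tendsto.mono_left
              nhdsWithin_le_nhds
          · exact eventually_mem_nhdsWithin.mono fun x hx => sub_le_sub_right hx t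
        exact (hF_rc (q - t)).tendsto.comp h1)
    have heq : (∫ h₁, ∫ h₂, Feps (q - (m h₂ + sgn (c h₂) * c h₂)) ∂κ (h₁, π₁ h₁) ∂μ)
        = P q := by
      rw [hP]; unfold prPi; simp_rw [sub_sub]
    rwa [heq] at h
  have hlim' : Tendsto P (nhdsWithin q (Ioi q)) (nhds (P q)) :=
    hlim.mono_left (nhdsWithin_mono q Ioi_subset_Ici_self)
  refine ge_of_tendsto hlim' ?_
  refine eventually_mem_nhdsWithin.mono fun w hw => ?_
  obtain ⟨z, hzS, hzw⟩ := (csInf_lt_iff hbdd hne).mp hw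
  exact le_trans hzS (hPmono hzw.le)

lemma inner_Gam (h₁ : X1) (z : ℝ) :
    (∫ h₂, Feps (z - m h₂ - sgn (c h₂) * c h₂) ∂κ (h₁, Gam κ m c Feps h₁ z)) =
      min (∫ h₂, Feps (z - m h₂ - sgn (c h₂) * c h₂) ∂κ (h₁, -1))
        (∫ h₂, Feps (z - m h₂ - sgn (c h₂) * c h₂) ∂κ (h₁, 1)) := by
  have hd : dfun κ m c Feps h₁ z =
      (∫ h₂, Feps (z - m h₂ - sgn (c h₂) * c h₂) ∂κ (h₁, -1)) -
        (∫ h₂, Feps (z - m h₂ - sgn (c h₂) * c h₂) ∂κ (h₁, 1)) := by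
    rw [dfun, Ifun_eq κ m c Feps hm hc hF_mono hF_mem,
      Ifun_eq κ m c Feps hm hc hF_mono hF_mem]
  by_cases hsg : 0 ≤ dfun κ m c Feps h₁ z
  · rw [hd] at hsg
    rw [Gam, sgn, if_pos (hd ▸ le_of_sub_nonneg (by linarith) : (0:ℝ) ≤ _)]
    · rw [min_eq_right (by linarith)]
  · rw [hd] at hsg
    rw [Gam, sgn, if_neg (by rw [hd]; intro h; exact hsg (by linarith))]
    rw [min_eq_left (by push_neg at hsg; linarith)]

lemma prPi_Gam_le {π₁ : X1 → ℝ} (hπ₁ : Measurable π₁)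
    (hπv : ∀ h₁, π₁ h₁ = 1 ∨ π₁ h₁ = -1) (z : ℝ) :
    prPi μ κ m c Feps (fun h₁ => Gam κ m c Feps h₁ z) (fun h₂ => sgn (c h₂)) z ≤
      prPi μ κ m c Feps π₁ (fun h₂ => sgn (c h₂)) z := by
  unfold prPi
  refine integral_mono
    (outer_int μ κ m c Feps hm hc hF_mono hF_mem
      (Gam_meas κ m c Feps hm hc hF_mono hF_mem z) z)
    (outer_int μ κ m c Feps hm hc hF_mono hF_mem hπ₁ z) fun h₁ => ?_
  rw [inner_Gam κ m c Feps hm hc hF_mono hF_mem h₁ z]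
  rcases hπv h₁ with h | h <;> rw [h]
  · exact min_le_right _ _
  · exact min_le_left _ _

lemma prPi_Gam_ge (z : ℝ) :
    prPi μ κ m c Feps (fun _ => (-1:ℝ)) (fun h₂ => sgn (c h₂)) z +
      prPi μ κ m c Feps (fun _ => (1:ℝ)) (fun h₂ => sgn (c h₂)) z - 1 ≤
    prPi μ κ m c Feps (fun h₁ => Gam κ m c Feps h₁ z) (fun h₂ => sgn (c h₂)) z := by
  have ia := outer_int μ κ m c Feps hm hc hF_mono hF_mem
    (measurable_const : Measurable fun _ : X1 => (-1:ℝ)) z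
  have ib := outer_int μ κ m c Feps hm hc hF_mono hF_mem
    (measurable_const : Measurable fun _ : X1 => (1:ℝ)) z
  have key : prPi μ κ m c Feps (fun _ => (-1:ℝ)) (fun h₂ => sgn (c h₂)) z +
      prPi μ κ m c Feps (fun _ => (1:ℝ)) (fun h₂ => sgn (c h₂)) z - 1 =
      ∫ h₁, ((∫ h₂, Feps (z - m h₂ - sgn (c h₂) * c h₂) ∂κ (h₁, -1)) +
        (∫ h₂, Feps (z - m h₂ - sgn (c h₂) * c h₂) ∂κ (h₁, 1)) - 1) ∂μ := by
    have iab : Integrable (fun h₁ =>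
        (∫ h₂, Feps (z - m h₂ - sgn (c h₂) * c h₂) ∂κ (h₁, -1)) +
          (∫ h₂, Feps (z - m h₂ - sgn (c h₂) * c h₂) ∂κ (h₁, 1))) μ := ia.add ib
    rw [integral_sub iab (integrable_const 1), integral_add ia ib, integral_const]
    unfold prPi
    simp
  rw [key]
  unfold prPi
  refine integral_mono ((ia.add ib).sub (integrable_const 1))
    (outer_int μ κ m c Feps hm hc hF_mono hF_mem
      (Gam_meas κ m c Feps hm hc hF_mono hF_mem z) z) fun h₁ => ?_
  rw [inner_Gam κ m c Feps hm hc hF_mono hF_mem h₁ z]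
  have h1 := (mem01 (κ (h₁, (-1:ℝ)))
    (g_meas m c Feps hm hc hF_mono z).aestronglyMeasurable (fun x => hF_mem _)).2
  have h2 := (mem01 (κ (h₁, (1:ℝ)))
    (g_meas m c Feps hm hc hF_mono z).aestronglyMeasurable (fun x => hF_mem _)).2
  exact le_min (by simp only []; linarith) (by simp only []; linarith)

end Aux

/-- fix `τ ∈ (0,1)`. For every `y ∈ ℝ`,
`pr^{(Γ(·,y), π₂*)}(Y ≤ f(y)) ≥ τ` and `f(y) ≤ y*_τ`. -/
theorem stmt7
    {X1 X2 : Type*} [MeasurableSpace X1] [MeasurableSpace X2]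
    [StandardBorelSpace X1] [StandardBorelSpace X2]
    (μ : Measure X1) [IsProbabilityMeasure μ]
    (κ : Kernel (X1 × ℝ) X2) [IsMarkovKernel κ]
    (m c : X2 → ℝ) (hm : Measurable m) (hc : Measurable c)
    (Feps : ℝ → ℝ) (hF_mono : Monotone Feps)
    (hF_rc : ∀ x : ℝ, ContinuousWithinAt Feps (Ici x) x)
    (hF_bot : Tendsto Feps atBot (nhds 0)) (hF_top : Tendsto Feps atTop (nhds 1))
    (hF_mem : ∀ x : ℝ, Feps x ∈ Icc (0:ℝ) 1)
    (τ : ℝ) (hτ : τ ∈ Ioo (0:ℝ) 1) (y : ℝ) :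
    τ ≤ prPi μ κ m c Feps (fun h₁ => Gam κ m c Feps h₁ y) (fun h₂ => sgn (c h₂))
          (fQIQ μ κ m c Feps τ y) ∧
    fQIQ μ κ m c Feps τ y ≤ ystar μ κ m c Feps τ := by
  obtain ⟨hne, hbdd, hmem⟩ := quant_mem μ κ m c Feps hm hc hF_mono hF_mem
    (Gam_meas κ m c Feps hm hc hF_mono hF_mem y) hF_rc hF_bot hF_top hτ
  constructor
  · show τ ≤ _
    unfold fQIQ quant
    exact hmem
  · have hS'ne : {z : ℝ | τ ≤ prPi μ κ m c Feps (fun h₁ => Gam κ m c Feps h₁ z)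
        (fun h₂ => sgn (c h₂)) z}.Nonempty := by
      have h1 := tendsto_prPi_atTop μ κ m c Feps hm hc hF_mono hF_mem
        (measurable_const : Measurable fun _ : X1 => (-1:ℝ)) hF_top
      have h2 := tendsto_prPi_atTop μ κ m c Feps hm hc hF_mono hF_mem
        (measurable_const : Measurable fun _ : X1 => (1:ℝ)) hF_top
      have h3 : Tendsto (fun z =>
          prPi μ κ m c Feps (fun _ => (-1:ℝ)) (fun h₂ => sgn (c h₂)) z +
          prPi μ κ m c Feps (fun _ => (1:ℝ)) (fun h₂ => sgn (c h₂)) z - 1)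
          atTop (nhds 1) := by
        have h4 := (h1.add h2).sub_const 1
        norm_num at h4
        exact h4
      obtain ⟨z, hz⟩ := (h3.eventually_const_le hτ.2).exists
      exact ⟨z, le_trans hz (prPi_Gam_ge μ κ m c Feps hm hc hF_mono hF_mem z)⟩
    have hsub : {z : ℝ | τ ≤ prPi μ κ m c Feps (fun h₁ => Gam κ m c Feps h₁ z)
          (fun h₂ => sgn (c h₂)) z} ⊆
        {w : ℝ | τ ≤ prPi μ κ m c Feps (fun h₁ => Gam κ m c Feps h₁ y)
          (fun h₂ => sgn (c h₂)) w} := by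
      intro z hz
      exact le_trans hz (prPi_Gam_le μ κ m c Feps hm hc hF_mono hF_mem
        (Gam_meas κ m c Feps hm hc hF_mono hF_mem y)
        (fun h₁ => sgn_vals _) z)
    show fQIQ μ κ m c Feps τ y ≤ ystar μ κ m c Feps τ
    unfold fQIQ quant ystar
    exact csInf_le_csInf hbdd hS'ne hsub
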